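/- Let f : X → X be a continuous map of a compact metric space, S a closed subset with f(S) ⊆ S, and suppose f has shadowing on B_b(S) for some b > 0. If x ∈ S, y ∈ X \ S and x → y (for every δ > 0 there is a δ-chain from x to y), then x belongs to the boundary ∂S of S. -/
import Mathlib


open Metric Filter Topology Set

variable {X : Type*}

/-- `(c i)_{i=0}^k` is a `δ`-chain of `f` (up to index `k`). -/
def IsDeltaChain [MetricSpace X] (f : X → X) (δ : ℝ) (k : ℕ) (c : ℕ → X) : Prop :=
  ∀ i < k, dist (f (c i)) (c (i + 1)) ≤ δ

/-- `x → y` : for every `δ > 0` there is a `δ`-chain from `x` to `y`. -/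
def ChainReach [MetricSpace X] (f : X → X) (x y : X) : Prop :=
  ∀ δ > 0, ∃ k ≥ 1, ∃ c : ℕ → X, c 0 = x ∧ c k = y ∧ IsDeltaChain f δ k c

/-- The chain recurrent set. -/
def ChainRec [MetricSpace X] (f : X → X) : Set X := {x | ChainReach f x x}

/-- `C` is a chain component of `f`. -/
def IsChainComponent [MetricSpace X] (f : X → X) (C : Set X) : Prop :=
  ∃ x, ChainReach f x x ∧
    C = {y | ChainReach f y y ∧ ChainReach f x y ∧ ChainReach f y x}

/-- A set is chain stable iff points chain-reachable from it stay in it. -/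
def ChainStable [MetricSpace X] (f : X → X) (S : Set X) : Prop :=
  ∀ x ∈ S, ∀ y, ChainReach f x y → y ∈ S

/-- `S` is "initially stable": if `y → x` with `x ∈ S` then `y ∈ S`. -/
def InitialStable [MetricSpace X] (f : X → X) (S : Set X) : Prop :=
  ∀ x ∈ S, ∀ y, ChainReach f y x → y ∈ S

/-- `f` restricted to `Λ` is chain transitive. -/
def ChainTransitiveOn [MetricSpace X] (f : X → X) (Λ : Set X) : Prop :=
  ∀ p ∈ Λ, ∀ q ∈ Λ, ∀ δ > 0, ∃ k ≥ 1, ∃ c : ℕ → X,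
    c 0 = p ∧ c k = q ∧ (∀ i ≤ k, c i ∈ Λ) ∧ IsDeltaChain f δ k c

/-- `f` has shadowing on `S`. -/
def ShadowsOn [MetricSpace X] (f : X → X) (S : Set X) : Prop :=
  ∀ ε > 0, ∃ δ > 0, ∀ (k : ℕ) (c : ℕ → X), (∀ i ≤ k, c i ∈ S) →
    IsDeltaChain f δ k c → ∃ x, ∀ i ≤ k, dist (c i) (f^[i] x) ≤ ε

/-- Iterate of a homeomorphism indexed by `ℤ`. -/
def hIter [TopologicalSpace X] (f : X ≃ₜ X) (i : ℤ) : X → X :=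
  if 0 ≤ i then (⇑f)^[i.toNat] else (⇑f.symm)^[(-i).toNat]

/-- A `δ`-limit-pseudo orbit of the homeomorphism `f`. -/
def IsLimitPseudoOrbit [MetricSpace X] (f : X ≃ₜ X) (δ : ℝ) (ξ : ℤ → X) : Prop :=
  (∀ i : ℤ, dist (f (ξ i)) (ξ (i + 1)) ≤ δ) ∧
  Tendsto (fun i : ℤ => dist (f (ξ i)) (ξ (i + 1))) atBot (nhds 0) ∧
  Tendsto (fun i : ℤ => dist (f (ξ i)) (ξ (i + 1))) atTop (nhds 0)

/-- `f` has L-shadowing on `S`. -/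
def LShadowsOn [MetricSpace X] (f : X ≃ₜ X) (S : Set X) : Prop :=
  ∀ ε > 0, ∃ δ > 0, ∀ ξ : ℤ → X, (∀ i : ℤ, ξ i ∈ S) →
    IsLimitPseudoOrbit f δ ξ →
    ∃ x : X, (∀ i : ℤ, dist (ξ i) (hIter f i x) ≤ ε) ∧
      Tendsto (fun i : ℤ => dist (ξ i) (hIter f i x)) atBot (nhds 0) ∧
      Tendsto (fun i : ℤ => dist (ξ i) (hIter f i x)) atTop (nhds 0)

/-- `f` is expansive on `S`. -/
def ExpansiveOn [MetricSpace X] (f : X ≃ₜ X) (S : Set X) : Prop :=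
  ∃ e > 0, ∀ x y : X, (∀ i : ℤ, hIter f i x ∈ S) → (∀ i : ℤ, hIter f i y ∈ S) →
    (∀ i : ℤ, dist (hIter f i x) (hIter f i y) ≤ e) → x = y

/-- Closed `b`-neighborhood of `S`. -/
def Nbhd [MetricSpace X] (b : ℝ) (S : Set X) : Set X := {x | Metric.infDist x S ≤ b}

/-- Attractor for a continuous map `f`. -/
def IsAttractor [TopologicalSpace X] (f : X → X) (Λ : Set X) : Prop :=
  IsClosed Λ ∧ f '' Λ = Λ ∧
    ∃ U : Set X, IsOpen U ∧ f '' closure U ⊆ U ∧ Λ = ⋂ i : ℕ, f^[i] '' U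

/-- `f` is (topologically) mixing. -/
def IsMixing [TopologicalSpace X] (f : X → X) : Prop :=
  ∀ U V : Set X, IsOpen U → IsOpen V → U.Nonempty → V.Nonempty →
    ∃ j : ℕ, ∀ i ≥ j, (f^[i] '' U ∩ V).Nonempty

/-- The ω-limit set of `x` under `f`. -/
def OmegaSet [TopologicalSpace X] (f : X → X) (x : X) : Set X :=
  {y | ∃ φ : ℕ → ℕ, StrictMono φ ∧ Tendsto (fun j => f^[φ j] x) atTop (nhds y)}

/-- `M` is a minimal set for `f`. -/
def IsMinimalSet [TopologicalSpace X] (f : X → X) (M : Set X) : Prop :=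
  M.Nonempty ∧ IsClosed M ∧ f '' M ⊆ M ∧ ∀ x ∈ M, OmegaSet f x = M

theorem stmt3 [MetricSpace X] [CompactSpace X] (f : X → X) (hf : Continuous f)
    (S : Set X) (hS : IsClosed S) (hinv : f '' S ⊆ S)
    (b : ℝ) (hb : 0 < b) (hsh : ShadowsOn f (Nbhd b S))
    (x y : X) (hx : x ∈ S) (hy : y ∉ S) (hxy : ChainReach f x y) :
    x ∈ frontier S := by
  classical
  rw [hS.frontier_eq]
  refine ⟨hx, fun hint => ?_⟩
  -- ball around x inside S
  obtain ⟨r, hr, hrball⟩ := Metric.mem_nhds_iff.mp (mem_interior_iff_mem_nhds.mp hint)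
  have hSne : S.Nonempty := ⟨x, hx⟩
  have hdy : 0 < infDist y S := (hS.notMem_iff_infDist_pos hSne).mp hy
  -- uniform continuity of f
  obtain ⟨η, hη, hηf⟩ := Metric.uniformContinuous_iff.mp
    (CompactSpace.uniformContinuous_of_continuous hf) (b / 2) (by positivity)
  set ε : ℝ := min (min r (infDist y S)) (min b η) / 2 with hεdef
  have hε : 0 < ε := by positivity
  have hεr : ε < r := by
    have : min (min r (infDist y S)) (min b η) ≤ r := le_trans (min_le_left _ _) (min_le_left _ _)
    nlinarith
  have hεdy : ε < infDist y S := by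
    have : min (min r (infDist y S)) (min b η) ≤ infDist y S :=
      le_trans (min_le_left _ _) (min_le_right _ _)
    nlinarith
  have hεb : ε ≤ b := by
    have : min (min r (infDist y S)) (min b η) ≤ b := le_trans (min_le_right _ _) (min_le_left _ _)
    nlinarith
  have hεη : ε < η := by
    have : min (min r (infDist y S)) (min b η) ≤ η := le_trans (min_le_right _ _) (min_le_right _ _)
    nlinarith
  obtain ⟨δ₀, hδ₀, hδ₀sh⟩ := hsh ε hε
  set δ : ℝ := min δ₀ (b / 2) with hδdef
  have hδ : 0 < δ := lt_min hδ₀ (by positivity)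
  obtain ⟨k, hk, c, hc0, hck, hchain⟩ := hxy δ hδ
  -- first index leaving the ε-neighborhood
  have hex : ∃ n, n ≤ k ∧ ε < infDist (c n) S := ⟨k, le_refl _, by rw [hck]; exact hεdy⟩
  have key : ∃ i, i ≤ k ∧ ε < infDist (c i) S ∧ ∀ j < i, infDist (c j) S ≤ ε := by
    refine ⟨Nat.find hex, (Nat.find_spec hex).1, (Nat.find_spec hex).2, ?_⟩
    intro j hj
    have h := Nat.find_min hex hj
    push_neg at h
    exact h (le_trans hj.le (Nat.find_spec hex).1)
  obtain ⟨i, hik, hiout, hbefore⟩ := key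
  have hi1 : 1 ≤ i := by
    rcases Nat.eq_zero_or_pos i with h0 | h1
    · exfalso
      have h2 : infDist (c 0) S = 0 := by
        rw [hc0]; exact infDist_zero_of_mem hx
      rw [h0, h2] at hiout
      exact absurd hiout (not_lt.mpr hε.le)
    · exact h1
  -- the truncated chain lies in Nbhd b S
  have hmem : ∀ j ≤ i, c j ∈ Nbhd b S := by
    intro j hj
    rcases lt_or_eq_of_le hj with hj | rfl
    · exact le_trans (hbefore j hj) hεb
    · -- j = i case
      -- use the previous point
      have hprev : infDist (c (j - 1)) S ≤ ε := hbefore _ (Nat.sub_lt hi1 one_pos)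
      obtain ⟨s, hs, hds⟩ := (hS.isCompact).exists_infDist_eq_dist hSne (c (j - 1))
      have hds' : dist (c (j - 1)) s < η := by rw [← hds]; exact lt_of_le_of_lt hprev hεη
      have hfs : dist (f (c (j - 1))) (f s) < b / 2 := hηf hds'
      have hchainstep : dist (f (c (j - 1))) (c j) ≤ δ := by
        have h1 : j - 1 < k := lt_of_lt_of_le (Nat.sub_lt hi1 one_pos) hik
        have := hchain (j - 1) h1
        rwa [Nat.sub_add_cancel hi1] at this
      show infDist (c j) S ≤ b
      calc infDist (c j) S ≤ dist (c j) (f s) := infDist_le_dist_of_mem (hinv ⟨s, hs, rfl⟩)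
        _ ≤ dist (c j) (f (c (j - 1))) + dist (f (c (j - 1))) (f s) := dist_triangle _ _ _
        _ ≤ δ + b / 2 := by rw [dist_comm]; exact add_le_add hchainstep hfs.le
        _ ≤ b / 2 + b / 2 := by gcongr; exact min_le_right _ _
        _ = b := by ring
  -- shadow the truncated chain
  have hchain' : IsDeltaChain f δ₀ i c := fun j hj =>
    le_trans (hchain j (lt_of_lt_of_le hj hik)) (min_le_left _ _)
  obtain ⟨z, hz⟩ := hδ₀sh i c hmem hchain'
  have hz0 : z ∈ S := by
    apply hrball
    have := hz 0 (Nat.zero_le _)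
    simp only [Function.iterate_zero, id_eq, hc0] at this
    rw [Metric.mem_ball, dist_comm]
    exact lt_of_le_of_lt this hεr
  have hzi : ∀ n, f^[n] z ∈ S := by
    intro n
    induction n with
    | zero => exact hz0
    | succ n ih => rw [Function.iterate_succ_apply']; exact hinv ⟨_, ih, rfl⟩
  have : infDist (c i) S ≤ ε :=
    le_trans (infDist_le_dist_of_mem (hzi i)) (hz i (le_refl _))
  exact absurd hiout (not_lt.mpr this)
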